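/- Let C ⊆ 𝔽₂ⁿ be a singly-even self-dual code, n ∈ 8ℤ, and let Λ(C) be its Construction A lattice. Then the number of norm-2 vectors (weight-one operators) satisfies: |V₁(Λ(C))| = 3n + 16|C₄|, where |C₄| is the number of codewords of weight 4; moreover for n ≥ 24, the orbifold lattice Λ_δ^orb with δ = (1,...,1)/√2 has |V₁(Λ_δ^orb)| = n + 8|C₄|, which is strictly smaller. -/

import Mathlib

open scoped BigOperators

namespace PaperFormal

/-- Standard dot product on `ℝⁿ`. -/
def dot {n : ℕ} (x y : Fin n → ℝ) : ℝ := ∑ i, x i * y i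

/-- Squared norm. -/
def nsq {n : ℕ} (x : Fin n → ℝ) : ℝ := dot x x

/-- The dual of a set of vectors: all vectors pairing integrally with every element. -/
def dualSet {n : ℕ} (L : Set (Fin n → ℝ)) : Set (Fin n → ℝ) :=
  {x | ∀ l ∈ L, ∃ k : ℤ, dot l x = (k : ℝ)}

/-- The even-norm part `Λ₀` of a lattice. -/
def evenSub {n : ℕ} (L : Set (Fin n → ℝ)) : Set (Fin n → ℝ) :=
  {l | l ∈ L ∧ ∃ k : ℤ, dot l l = 2 * (k : ℝ)}

/-- The shadow `S(Λ) = Λ₀* \ Λ`. -/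
def shadow {n : ℕ} (L : Set (Fin n → ℝ)) : Set (Fin n → ℝ) :=
  dualSet (evenSub L) \ L

/-- An odd self-dual lattice: equal to its dual, and containing a vector of odd norm. -/
def IsOddSelfDual {n : ℕ} (L : Set (Fin n → ℝ)) : Prop :=
  L = dualSet L ∧ ∃ v ∈ L, ∃ k : ℤ, dot v v = 2 * (k : ℝ) + 1

/-- `χ` is a characteristic vector of `L`: `λ·λ ≡ χ·λ (mod 2)` for all `λ ∈ L`. -/
def IsCharacteristic {n : ℕ} (L : Set (Fin n → ℝ)) (χ : Fin n → ℝ) : Prop :=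
  χ ∈ L ∧ ∀ l ∈ L, ∃ k : ℤ, dot l l - dot χ l = 2 * (k : ℝ)

/-- `Λ_{δ-even}`. -/
def deltaEven {n : ℕ} (L : Set (Fin n → ℝ)) (δ : Fin n → ℝ) : Set (Fin n → ℝ) :=
  {l | l ∈ L ∧ ∃ k : ℤ, dot δ l = 2 * (k : ℝ)}

/-- `Λ_{δ-odd}`. -/
def deltaOdd {n : ℕ} (L : Set (Fin n → ℝ)) (δ : Fin n → ℝ) : Set (Fin n → ℝ) :=
  {l | l ∈ L ∧ ∃ k : ℤ, dot δ l = 2 * (k : ℝ) + 1}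

/-- Translate a set of vectors by `v`. -/
def shiftSet {n : ℕ} (A : Set (Fin n → ℝ)) (v : Fin n → ℝ) : Set (Fin n → ℝ) :=
  (fun x => x + v) '' A

/-- The orbifold lattice `Λ⁺ = Λ_even ∪ (Λ_even + δ/2)`. -/
def orbPlus {n : ℕ} (L : Set (Fin n → ℝ)) (δ : Fin n → ℝ) : Set (Fin n → ℝ) :=
  deltaEven L δ ∪ shiftSet (deltaEven L δ) ((2 : ℝ)⁻¹ • δ)

/-- The orbifold lattice `Λ⁻ = Λ_even ∪ (Λ_odd + δ/2)`. -/
def orbMinus {n : ℕ} (L : Set (Fin n → ℝ)) (δ : Fin n → ℝ) : Set (Fin n → ℝ) :=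
  deltaEven L δ ∪ shiftSet (deltaOdd L δ) ((2 : ℝ)⁻¹ • δ)

/-- The gauging condition for a shift vector: `δ ∈ Λ`, `δ/2 ∉ Λ ∪ S(Λ)`, `δ² ∈ 4ℤ`. -/
def GaugingCondition {n : ℕ} (L : Set (Fin n → ℝ)) (δ : Fin n → ℝ) : Prop :=
  δ ∈ L ∧ (2 : ℝ)⁻¹ • δ ∉ L ∧ (2 : ℝ)⁻¹ • δ ∉ shadow L ∧
    ∃ k : ℤ, dot δ δ = 4 * (k : ℝ)

/-- Inner product of codewords, valued in `ℤ/k`. -/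
def codeDot {n k : ℕ} (c c' : Fin n → ZMod k) : ZMod k := ∑ i, c i * c' i

/-- The dual code. -/
def dualCode {n k : ℕ} (C : Set (Fin n → ZMod k)) : Set (Fin n → ZMod k) :=
  {x | ∀ c ∈ C, codeDot c x = 0}

/-- Hamming weight of a binary codeword. -/
def wt {n : ℕ} (c : Fin n → ZMod 2) : ℕ :=
  (Finset.univ.filter fun i => c i = 1).card

/-- A singly-even self-dual binary code: self-dual, with some codeword of weight `≢ 0 (mod 4)`. -/
def IsSinglyEvenSelfDual {n : ℕ} (C : Set (Fin n → ZMod 2)) : Prop :=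
  C = dualCode C ∧ ∃ c ∈ C, ¬ (4 ∣ wt c)

/-- Lift of a binary codeword to `{0,1}ⁿ ⊆ ℝⁿ`. -/
def liftBin {n : ℕ} (c : Fin n → ZMod 2) : Fin n → ℝ := fun i => ((c i).val : ℝ)

/-- Construction A lattice of a binary code: `Λ(C) = {(c + 2m)/√2}`. -/
def constructionA {n : ℕ} (C : Set (Fin n → ZMod 2)) : Set (Fin n → ℝ) :=
  {x | ∃ c ∈ C, ∃ m : Fin n → ℤ,
    x = fun i => (liftBin c i + 2 * (m i : ℝ)) / Real.sqrt 2}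

/-- Construction A lattice of a `ℤ/k` code: `Λ(C) = {(c + km)/√k}`. -/
def constructionAZ {n : ℕ} (k : ℕ) (C : Set (Fin n → ZMod k)) : Set (Fin n → ℝ) :=
  {x | ∃ c ∈ C, ∃ m : Fin n → ℤ,
    x = fun i => (((c i).val : ℝ) + (k : ℝ) * (m i : ℝ)) / Real.sqrt k}

/-- The shift vector `δ = (1,…,1)/√2`. -/
noncomputable def deltaAll (n : ℕ) : Fin n → ℝ := fun _ => 1 / Real.sqrt 2

/-- Theta function of a set of vectors, `Θ_L(q) = Σ_{λ∈L} q^{λ²/2}`. -/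
noncomputable def thetaSet {n : ℕ} (L : Set (Fin n → ℝ)) (q : ℝ) : ℝ :=
  ∑' l : L, q ^ (dot (l : Fin n → ℝ) (l : Fin n → ℝ) / 2)

/-- Jacobi theta function `θ₂(q) = Σ_m q^{(m+1/2)²/2}`. -/
noncomputable def theta2 (q : ℝ) : ℝ := ∑' m : ℤ, q ^ (((m : ℝ) + 1 / 2) ^ 2 / 2)

/-- Jacobi theta function `θ₃(q) = Σ_m q^{m²/2}`. -/
noncomputable def theta3 (q : ℝ) : ℝ := ∑' m : ℤ, q ^ ((m : ℝ) ^ 2 / 2)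

/-- Jacobi theta function `θ₄(q) = Σ_m (−1)^m q^{m²/2}`. -/
noncomputable def theta4 (q : ℝ) : ℝ := ∑' m : ℤ, (-1 : ℝ) ^ m * q ^ ((m : ℝ) ^ 2 / 2)

/-- `ℤⁿ₊`: integer vectors with even coordinate sum. -/
def intEven (n : ℕ) : Set (Fin n → ℤ) := {m | Even (∑ i, m i)}

/-- `ℤⁿ₋`: integer vectors with odd coordinate sum. -/
def intOdd (n : ℕ) : Set (Fin n → ℤ) := {m | Odd (∑ i, m i)}

/-- The doubly-even subcode `C₀` of a binary code. -/
def doublyEvenSub {n : ℕ} (C : Set (Fin n → ZMod 2)) : Set (Fin n → ZMod 2) :=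
  {c | c ∈ C ∧ wt c % 4 = 0}

/-- The code shadow `S(C) = C₀⊥ \ C`. -/
def codeShadow {n : ℕ} (C : Set (Fin n → ZMod 2)) : Set (Fin n → ZMod 2) :=
  dualCode (doublyEvenSub C) \ C

/-! ### Auxiliary machinery for STATEMENT 19 -/

section Statement19Aux

variable {n : ℕ}

/-- Scaling map `a ↦ a / √2` from integer vectors to real vectors. -/
noncomputable def phiA (a : Fin n → ℤ) : Fin n → ℝ := fun i => (a i : ℝ) / Real.sqrt 2

/-- Reduction of an integer vector mod 2. -/
def redA (a : Fin n → ℤ) : Fin n → ZMod 2 := fun i => (a i : ZMod 2)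

lemma sqrt2_mul_self : Real.sqrt 2 * Real.sqrt 2 = 2 :=
  Real.mul_self_sqrt (by norm_num)

lemma sqrt2_ne_zero : Real.sqrt 2 ≠ 0 := by
  have := Real.sqrt_pos.mpr (by norm_num : (0:ℝ) < 2); linarith

lemma phiA_injective : Function.Injective (phiA (n := n)) := by
  intro a b h
  funext i
  have h1 := congrFun h i
  simp only [phiA] at h1
  have h2 : ((a i : ℝ)) = (b i : ℝ) := by
    field_simp at h1; exact_mod_cast h1
  exact_mod_cast h2

lemma nsq_phiA (a : Fin n → ℤ) : nsq (phiA a) = ((∑ i, (a i)^2 : ℤ) : ℝ) / 2 := by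
  unfold nsq dot phiA
  push_cast
  rw [Finset.sum_div]
  refine Finset.sum_congr rfl fun i _ => ?_
  rw [div_mul_div_comm, sqrt2_mul_self]
  ring

lemma dot_delta_phiA (a : Fin n → ℤ) :
    dot (deltaAll n) (phiA a) = ((∑ i, a i : ℤ) : ℝ) / 2 := by
  unfold dot deltaAll phiA
  push_cast
  rw [Finset.sum_div]
  refine Finset.sum_congr rfl fun i _ => ?_
  rw [div_mul_div_comm, one_mul, sqrt2_mul_self]

lemma val_natCast2 (x : ZMod 2) : (x.val : ZMod 2) = x := by revert x; decide

lemma mem_constructionA_iff (C : Set (Fin n → ZMod 2)) (l : Fin n → ℝ) :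
    l ∈ constructionA C ↔ ∃ a : Fin n → ℤ, redA a ∈ C ∧ l = phiA a := by
  constructor
  · rintro ⟨c, hc, m, rfl⟩
    refine ⟨fun i => ((c i).val : ℤ) + 2 * m i, ?_, ?_⟩
    · have hr : redA (fun i => ((c i).val : ℤ) + 2 * m i) = c := by
        funext i
        simp only [redA]
        push_cast
        rw [val_natCast2]
        rw [show (2 : ZMod 2) = 0 from rfl]
        ring
      rw [hr]; exact hc
    · funext i
      simp only [phiA, liftBin]
      push_cast
      ring_nf
  · rintro ⟨a, ha, rfl⟩
    refine ⟨redA a, ha, fun i => (a i - ((redA a i).val : ℤ)) / 2, ?_⟩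
    funext i
    have hdvd : (2:ℤ) ∣ a i - ((redA a i).val : ℤ) := by
      have h0 : ((a i - ((redA a i).val : ℤ) : ℤ) : ZMod 2) = 0 := by
        push_cast
        rw [val_natCast2]
        simp [redA]
      exact (ZMod.intCast_zmod_eq_zero_iff_dvd _ 2).mp h0
    have h2 : 2 * ((a i - ((redA a i).val : ℤ)) / 2) = a i - ((redA a i).val : ℤ) :=
      Int.mul_ediv_cancel' hdvd
    simp only [phiA, liftBin]
    rw [show (2:ℝ) * ((((a i - ((redA a i).val : ℤ)) / 2 : ℤ) : ℝ)) =
        (((2 * ((a i - ((redA a i).val : ℤ)) / 2) : ℤ)) : ℝ) by push_cast; ring, h2]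
    push_cast
    ring_nf

/-- The norm-2 vectors of the Construction A lattice, as an image. -/
lemma constructionA_norm2 (C : Set (Fin n → ZMod 2)) :
    {l ∈ constructionA C | nsq l = 2}
      = phiA '' {a : Fin n → ℤ | redA a ∈ C ∧ ∑ i, (a i)^2 = 4} := by
  ext l
  simp only [Set.mem_sep_iff, Set.mem_image, Set.mem_setOf_eq]
  constructor
  · rintro ⟨hl, hn2⟩
    obtain ⟨a, ha, rfl⟩ := (mem_constructionA_iff C l).mp hl
    refine ⟨a, ⟨ha, ?_⟩, rfl⟩
    rw [nsq_phiA] at hn2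
    have : ((∑ i, (a i)^2 : ℤ) : ℝ) = 4 := by linarith
    exact_mod_cast this
  · rintro ⟨a, ⟨ha, hs⟩, rfl⟩
    refine ⟨(mem_constructionA_iff C _).mpr ⟨a, ha, rfl⟩, ?_⟩
    rw [nsq_phiA, hs]
    norm_num

end Statement19Aux

section Statement19Count

variable {n : ℕ}

/-- An equivalence between the support of a weight-4 codeword and `Fin 4`. -/
noncomputable def suppEquiv (c : Fin n → ZMod 2) (h : wt c = 4) :
    {i : Fin n // c i = 1} ≃ Fin 4 :=
  Fintype.equivFinOfCardEq (by rw [Fintype.card_subtype]; exact h)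

/-- Parametrization of the `±√2 eᵢ` norm-2 vectors. -/
def gvec (p : Fin n × Bool) : Fin n → ℤ :=
  fun j => if j = p.1 then (if p.2 then 2 else -2) else 0

/-- Parametrization of the norm-2 vectors supported on weight-4 codewords. -/
noncomputable def Hmap (C : Set (Fin n → ZMod 2))
    (p : {c : Fin n → ZMod 2 // c ∈ C ∧ wt c = 4} × (Fin 4 → Bool)) : Fin n → ℤ :=
  fun i => if hi : (p.1 : Fin n → ZMod 2) i = 1
    then (if p.2 (suppEquiv (p.1 : Fin n → ZMod 2) p.1.2.2 ⟨i, hi⟩) then 1 else -1) else 0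

lemma gvec_injective : Function.Injective (gvec (n := n)) := by
  rintro ⟨i, b⟩ ⟨j, c⟩ h
  have hi := congrFun h i
  have hj := congrFun h j
  simp only [gvec, if_pos rfl] at hi hj
  by_cases hij : i = j
  · subst hij
    simp only [if_pos rfl] at hi
    cases b <;> cases c <;> simp_all
  · rw [if_neg hij] at hi
    cases b <;> simp at hi
  
lemma redA_gvec (p : Fin n × Bool) : redA (gvec p) = 0 := by
  funext j
  simp only [redA, gvec]
  split
  · cases p.2 <;> simp <;> decide
  · simp

lemma sum_sq_gvec (p : Fin n × Bool) : ∑ i, (gvec p i)^2 = 4 := by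
  have : ∀ i, (gvec p i)^2 = if i = p.1 then 4 else 0 := by
    intro i
    simp only [gvec]
    split
    · cases p.2 <;> norm_num
    · norm_num
  rw [Finset.sum_congr rfl fun i _ => this i]
  simp

lemma sum_gvec (p : Fin n × Bool) : ∑ i, gvec p i = if p.2 then 2 else -2 := by
  simp only [gvec]
  rw [Finset.sum_ite_eq' Finset.univ p.1 (fun _ => if p.2 then (2:ℤ) else -2)]
  simp

lemma redA_Hmap (C : Set (Fin n → ZMod 2))
    (p : {c : Fin n → ZMod 2 // c ∈ C ∧ wt c = 4} × (Fin 4 → Bool)) :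
    redA (Hmap C p) = (p.1 : Fin n → ZMod 2) := by
  funext i
  simp only [redA, Hmap]
  split
  · rename_i hi
    rw [hi]
    split <;> decide
  · rename_i hi
    have : ∀ x : ZMod 2, x ≠ 1 → ((0:ℤ) : ZMod 2) = x := by decide
    exact this _ hi

lemma sum_sq_Hmap (C : Set (Fin n → ZMod 2))
    (p : {c : Fin n → ZMod 2 // c ∈ C ∧ wt c = 4} × (Fin 4 → Bool)) :
    ∑ i, (Hmap C p i)^2 = 4 := by
  have h1 : ∀ i, (Hmap C p i)^2 = if (p.1 : Fin n → ZMod 2) i = 1 then 1 else 0 := by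
    intro i
    simp only [Hmap]
    by_cases hi : (p.1 : Fin n → ZMod 2) i = 1
    · rw [dif_pos hi, if_pos hi]
      split <;> norm_num
    · rw [dif_neg hi, if_neg hi]
      norm_num

  rw [Finset.sum_congr rfl fun i _ => h1 i, Finset.sum_boole]
  have := p.1.2.2
  unfold wt at this
  rw [this]
  norm_num

lemma sum_Hmap (C : Set (Fin n → ZMod 2))
    (p : {c : Fin n → ZMod 2 // c ∈ C ∧ wt c = 4} × (Fin 4 → Bool)) :
    ∑ i, Hmap C p i = ∑ j : Fin 4, (if p.2 j then (1:ℤ) else -1) := by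
  classical
  have h0 : ∑ i, Hmap C p i
      = ∑ i ∈ Finset.univ.filter (fun i => (p.1 : Fin n → ZMod 2) i = 1), Hmap C p i := by
    refine (Finset.sum_subset (Finset.filter_subset _ _) ?_).symm
    intro i _ hi
    simp only [Finset.mem_filter, Finset.mem_univ, true_and] at hi
    simp [Hmap, hi]
  rw [h0]
  rw [Finset.sum_subtype (p := fun i => (p.1 : Fin n → ZMod 2) i = 1)
    (Finset.univ.filter (fun i => (p.1 : Fin n → ZMod 2) i = 1))
    (fun i => by simp) (fun i => Hmap C p i)]
  refine Fintype.sum_equiv (suppEquiv (p.1 : Fin n → ZMod 2) p.1.2.2) _ _ ?_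
  rintro ⟨i, hi⟩
  simp [Hmap, hi]

lemma Hmap_injective (C : Set (Fin n → ZMod 2)) : Function.Injective (Hmap C) := by
  rintro ⟨⟨c, hc⟩, f⟩ ⟨⟨c', hc'⟩, f'⟩ h
  have hcc : c = c' := by
    have := congrArg redA h
    rwa [redA_Hmap, redA_Hmap] at this
  subst hcc
  simp only [Prod.mk.injEq, Subtype.mk.injEq, true_and]
  funext j
  set e := suppEquiv c hc.2 with he
  have hi := congrFun h (e.symm j : {i : Fin n // c i = 1}).1
  have hmem : c ((e.symm j : {i : Fin n // c i = 1}).1) = 1 := (e.symm j).2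
  simp only [Hmap, dif_pos hmem] at hi
  have hfix : (⟨(e.symm j : {i : Fin n // c i = 1}).1, hmem⟩ : {i : Fin n // c i = 1})
      = e.symm j := by exact Subtype.ext rfl
  rw [hfix] at hi
  rw [Equiv.apply_symm_apply] at hi
  by_cases h1 : f j <;> by_cases h2 : f' j <;> simp_all

/-- Decomposition of the set of integer norm-4 vectors over `C`. -/
lemma A_decomp (C : Set (Fin n → ZMod 2)) (h0 : (0 : Fin n → ZMod 2) ∈ C) :
    {a : Fin n → ℤ | redA a ∈ C ∧ ∑ i, (a i)^2 = 4}
      = Set.range (gvec (n := n)) ∪ Set.range (Hmap C) := by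
  classical
  ext a
  simp only [Set.mem_setOf_eq, Set.mem_union, Set.mem_range]
  constructor
  · rintro ⟨hmem, hsum⟩
    have hle : ∀ i, (a i)^2 ≤ 4 := by
      intro i
      calc (a i)^2 ≤ ∑ k, (a k)^2 :=
            Finset.single_le_sum (fun k _ => sq_nonneg (a k)) (Finset.mem_univ i)
        _ = 4 := hsum
    by_cases hbig : ∃ i, a i = 2 ∨ a i = -2
    · left
      obtain ⟨i, hi⟩ := hbig
      have hsq4 : (a i)^2 = 4 := by rcases hi with h | h <;> rw [h] <;> norm_num
      have hrest : ∀ j, j ≠ i → a j = 0 := by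
        intro j hj
        have hsplit := Finset.add_sum_erase Finset.univ (fun k => (a k)^2) (Finset.mem_univ i)
        have hz : ∑ k ∈ Finset.univ.erase i, (a k)^2 = 0 := by
          linarith [hsum]
        have := (Finset.sum_eq_zero_iff_of_nonneg
          (fun k _ => sq_nonneg (a k))).mp hz j (by simp [hj])
        exact pow_eq_zero_iff (by norm_num) |>.mp this
      refine ⟨(i, decide (a i = 2)), ?_⟩
      funext j
      simp only [gvec]
      by_cases hj : j = i
      · subst hj
        rcases hi with h | h <;> simp [h]
      · simp [hj, hrest j hj]
    · right
      push_neg at hbig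
      have hsmall : ∀ i, a i = -1 ∨ a i = 0 ∨ a i = 1 := by
        intro i
        have h1 := hle i
        have h2 := (hbig i).1
        have h3 := (hbig i).2
        have hub : a i ≤ 2 := by nlinarith [sq_nonneg (a i - 2)]
        have hlb : -2 ≤ a i := by nlinarith [sq_nonneg (a i + 2)]
        omega
      have c1 : (((-1:ℤ)) : ZMod 2) = 1 := by decide
      have c2 : (((1:ℤ)) : ZMod 2) = 1 := by decide
      have hsq : ∀ i, (a i)^2 = if redA a i = 1 then 1 else 0 := by
        intro i
        simp only [redA]
        rcases hsmall i with h | h | h <;> simp only [h]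
        · rw [c1]; norm_num
        · norm_num
        · rw [c2]; norm_num
      have hcard : ∑ i, (a i)^2
          = ((Finset.univ.filter fun i => redA a i = 1).card : ℤ) := by
        rw [Finset.sum_congr rfl fun i _ => hsq i, Finset.sum_boole]
      have hwt : wt (redA a) = 4 := by
        unfold wt
        have : ((Finset.univ.filter fun i => redA a i = 1).card : ℤ) = 4 := by
          rw [← hcard]; exact hsum
        exact_mod_cast this
      refine ⟨(⟨redA a, hmem, hwt⟩, fun j =>
        decide (a (((suppEquiv (redA a) hwt).symm j : {i : Fin n // redA a i = 1}) : Fin n)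
          = 1)), ?_⟩
      funext i
      simp only [Hmap]
      by_cases hi : redA a i = 1
      · rw [dif_pos hi]
        simp only [Equiv.symm_apply_apply]
        have hne0 : a i ≠ 0 := by
          intro h
          rw [redA, h] at hi
          simp at hi
        rcases hsmall i with h | h | h
        · rw [h]; norm_num
        · exact absurd h hne0
        · rw [h]; norm_num
      · rw [dif_neg hi]
        rcases hsmall i with h | h | h
        · exact absurd (by rw [redA, h, c1]) hi
        · exact h.symm
        · exact absurd (by rw [redA, h, c2]) hi
  · rintro (⟨p, rfl⟩ | ⟨p, rfl⟩)
    · exact ⟨by rw [redA_gvec]; exact h0, sum_sq_gvec p⟩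
    · exact ⟨by rw [redA_Hmap]; exact p.1.2.1, sum_sq_Hmap C p⟩

end Statement19Count

section Statement19Main

variable {n : ℕ}

lemma count_A (C : Set (Fin n → ZMod 2)) (h0 : (0 : Fin n → ZMod 2) ∈ C) :
    {a : Fin n → ℤ | redA a ∈ C ∧ ∑ i, (a i)^2 = 4}.ncard
      = 2 * n + 16 * {c ∈ C | wt c = 4}.ncard := by
  classical
  rw [A_decomp C h0]
  have hdisj : Disjoint (Set.range (gvec (n := n))) (Set.range (Hmap C)) := by
    rw [Set.disjoint_left]
    rintro x ⟨p, rfl⟩ hq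
    obtain ⟨q, hq⟩ := hq
    have hg : gvec p p.1 = 2 ∨ gvec p p.1 = -2 := by
      simp only [gvec, if_pos rfl]
      cases p.2 <;> simp
    have hh : Hmap C q p.1 = 1 ∨ Hmap C q p.1 = -1 ∨ Hmap C q p.1 = 0 := by
      simp only [Hmap]
      split
      · split
        · left; rfl
        · right; left; rfl
      · right; right; rfl
    rw [hq] at hh
    omega
  rw [Set.ncard_union_eq hdisj (Set.finite_range _) (Set.finite_range _)]
  have h1 : (Set.range (gvec (n := n))).ncard = 2 * n := by
    rw [← Nat.card_coe_set_eq, Nat.card_range_of_injective gvec_injective,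
      Nat.card_eq_fintype_card, Fintype.card_prod, Fintype.card_fin, Fintype.card_bool]
    ring
  have hcsub : Nat.card {c : Fin n → ZMod 2 // c ∈ C ∧ wt c = 4}
      = {c ∈ C | wt c = 4}.ncard := by
    rw [← Nat.card_coe_set_eq]
    exact Nat.card_congr (Equiv.subtypeEquivRight (fun c => by
      simp [Set.mem_sep_iff])).symm
  have h2 : (Set.range (Hmap C)).ncard = 16 * {c ∈ C | wt c = 4}.ncard := by
    rw [← Nat.card_coe_set_eq, Nat.card_range_of_injective (Hmap_injective C),
      Nat.card_prod, hcsub]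
    have hb : Nat.card (Fin 4 → Bool) = 16 := by
      simp [Nat.card_eq_fintype_card]
    rw [hb]
    ring
  rw [h1, h2]

/-- Restricted parametrization for the `δ`-even norm-2 vectors. -/
noncomputable def Hmap' (C : Set (Fin n → ZMod 2))
    (p : {c : Fin n → ZMod 2 // c ∈ C ∧ wt c = 4} ×
      {f : Fin 4 → Bool // (∑ j, (if f j then (1:ℤ) else -1)) % 4 = 0}) : Fin n → ℤ :=
  Hmap C (p.1, p.2.1)

lemma Hmap'_injective (C : Set (Fin n → ZMod 2)) : Function.Injective (Hmap' C) := by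
  rintro ⟨c, f⟩ ⟨c', f'⟩ h
  have h2 := Hmap_injective C h
  simp only [Prod.mk.injEq] at h2
  exact Prod.ext (by exact h2.1) (Subtype.ext h2.2)

lemma A'_decomp (C : Set (Fin n → ZMod 2)) (h0 : (0 : Fin n → ZMod 2) ∈ C) :
    {a : Fin n → ℤ | redA a ∈ C ∧ ∑ i, (a i)^2 = 4 ∧ (∑ i, a i) % 4 = 0}
      = Set.range (Hmap' C) := by
  ext a
  simp only [Set.mem_setOf_eq, Set.mem_range]
  constructor
  · rintro ⟨hm, hs, hd⟩
    have hA : a ∈ {a : Fin n → ℤ | redA a ∈ C ∧ ∑ i, (a i)^2 = 4} := ⟨hm, hs⟩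
    rw [A_decomp C h0] at hA
    rcases hA with ⟨p, rfl⟩ | ⟨p, rfl⟩
    · exfalso
      rw [sum_gvec] at hd
      cases hb : p.2 <;> rw [hb] at hd <;> omega
    · refine ⟨(p.1, ⟨p.2, ?_⟩), ?_⟩
      · rw [sum_Hmap] at hd; exact hd
      · show Hmap C (p.1, p.2) = Hmap C p
        rw [Prod.mk.eta]
  · rintro ⟨⟨c, f⟩, rfl⟩
    have hh : Hmap' C (c, f) = Hmap C (c, f.1) := rfl
    refine ⟨by rw [hh, redA_Hmap]; exact c.2.1, by rw [hh]; exact sum_sq_Hmap C _, ?_⟩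
    rw [hh, sum_Hmap]
    exact f.2

lemma count_A' (C : Set (Fin n → ZMod 2)) (h0 : (0 : Fin n → ZMod 2) ∈ C) :
    {a : Fin n → ℤ | redA a ∈ C ∧ ∑ i, (a i)^2 = 4 ∧ (∑ i, a i) % 4 = 0}.ncard
      = 8 * {c ∈ C | wt c = 4}.ncard := by
  classical
  rw [A'_decomp C h0]
  have hcsub : Nat.card {c : Fin n → ZMod 2 // c ∈ C ∧ wt c = 4}
      = {c ∈ C | wt c = 4}.ncard := by
    rw [← Nat.card_coe_set_eq]
    exact Nat.card_congr (Equiv.subtypeEquivRight (fun c => by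
      simp [Set.mem_sep_iff])).symm
  rw [← Nat.card_coe_set_eq, Nat.card_range_of_injective (Hmap'_injective C),
    Nat.card_prod, hcsub]
  have h8 : Nat.card {f : Fin 4 → Bool // (∑ j, (if f j then (1:ℤ) else -1)) % 4 = 0}
      = 8 := by
    rw [Nat.card_eq_fintype_card]
    decide
  rw [h8]
  ring

lemma deltaEven_norm2 (C : Set (Fin n → ZMod 2)) :
    {l ∈ deltaEven (constructionA C) (deltaAll n) | nsq l = 2}
      = phiA '' {a : Fin n → ℤ | redA a ∈ C ∧ ∑ i, (a i)^2 = 4 ∧ (∑ i, a i) % 4 = 0} := by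
  ext l
  simp only [Set.mem_sep_iff, deltaEven, Set.mem_setOf_eq, Set.mem_image]
  constructor
  · rintro ⟨⟨hl, k, hk⟩, hn2⟩
    obtain ⟨a, ha, rfl⟩ := (mem_constructionA_iff C l).mp hl
    refine ⟨a, ⟨ha, ?_, ?_⟩, rfl⟩
    · rw [nsq_phiA] at hn2
      have h4 : ((∑ i, (a i)^2 : ℤ) : ℝ) = 4 := by linarith
      exact_mod_cast h4
    · rw [dot_delta_phiA] at hk
      have h4 : ((∑ i, a i : ℤ) : ℝ) = ((4 * k : ℤ) : ℝ) := by
        push_cast at hk ⊢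
        linarith
      have h5 : (∑ i, a i) = 4 * k := by exact_mod_cast h4
      omega
  · rintro ⟨a, ⟨ha, hs, hd⟩, rfl⟩
    refine ⟨⟨(mem_constructionA_iff C _).mpr ⟨a, ha, rfl⟩, ?_⟩, ?_⟩
    · obtain ⟨k, hk⟩ : (4:ℤ) ∣ ∑ i, a i := Int.dvd_of_emod_eq_zero hd
      refine ⟨k, ?_⟩
      rw [dot_delta_phiA, hk]
      push_cast
      ring
    · rw [nsq_phiA, hs]
      norm_num

lemma odd_sq_ge_one (a : ℤ) : 1 ≤ (2 * a + 1)^2 := by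
  rcases le_or_gt 0 a with h | h
  · nlinarith
  · nlinarith

lemma shift_norm2_empty (C : Set (Fin n → ZMod 2)) (h24 : 24 ≤ n) :
    {l ∈ shiftSet (deltaEven (constructionA C) (deltaAll n)) ((2:ℝ)⁻¹ • deltaAll n) |
      nsq l = 2} = ∅ := by
  ext x
  simp only [Set.mem_empty_iff_false, iff_false]
  rintro ⟨hx1, hn2⟩
  obtain ⟨y, hy, rfl⟩ := hx1
  obtain ⟨a, ha, rfl⟩ := (mem_constructionA_iff C y).mp hy.1
  have hx : ∀ i, (phiA a + (2:ℝ)⁻¹ • deltaAll n) i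
      = ((2 * a i + 1 : ℤ) : ℝ) / (2 * Real.sqrt 2) := by
    intro i
    simp only [Pi.add_apply, Pi.smul_apply, phiA, deltaAll, smul_eq_mul]
    push_cast
    rw [div_add' _ _ _ (by positivity), div_eq_div_iff (by positivity) (by positivity)]
    ring_nf
    rw [pow_two, mul_inv_cancel_right₀ sqrt2_ne_zero]
  have hnsq : nsq (phiA a + (2:ℝ)⁻¹ • deltaAll n)
      = ((∑ i, (2 * a i + 1)^2 : ℤ) : ℝ) / 8 := by
    unfold nsq dot
    rw [Finset.sum_congr rfl fun i _ => by rw [hx i]]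
    push_cast
    rw [Finset.sum_div]
    refine Finset.sum_congr rfl fun i _ => ?_
    rw [div_mul_div_comm]
    have h8 : (2 * Real.sqrt 2) * (2 * Real.sqrt 2) = 8 := by
      nlinarith [sqrt2_mul_self]
    rw [h8]
    ring
  rw [hnsq] at hn2
  have h16 : (∑ i, (2 * a i + 1)^2 : ℤ) = 16 := by
    have : ((∑ i, (2 * a i + 1)^2 : ℤ) : ℝ) = 16 := by linarith
    exact_mod_cast this
  have hge : (n : ℤ) ≤ ∑ i, (2 * a i + 1)^2 := by
    calc (n : ℤ) = ∑ _i : Fin n, (1:ℤ) := by simp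
      _ ≤ _ := Finset.sum_le_sum fun i _ => odd_sq_ge_one (a i)
  omega

lemma orb_norm2 (C : Set (Fin n → ZMod 2)) (h24 : 24 ≤ n) :
    {l ∈ orbPlus (constructionA C) (deltaAll n) | nsq l = 2}
      = {l ∈ deltaEven (constructionA C) (deltaAll n) | nsq l = 2} := by
  have he := shift_norm2_empty C h24
  ext l
  simp only [orbPlus, Set.mem_sep_iff, Set.mem_union]
  constructor
  · rintro ⟨h | h, h2⟩
    · exact ⟨h, h2⟩
    · exfalso
      have : l ∈ {l ∈ shiftSet (deltaEven (constructionA C) (deltaAll n))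
          ((2:ℝ)⁻¹ • deltaAll n) | nsq l = 2} := ⟨h, h2⟩
      rw [he] at this
      exact this
  · rintro ⟨h, h2⟩
    exact ⟨Or.inl h, h2⟩

end Statement19Main

/-- counts of weight-one operators: `|V₁(Λ(C))| = 3n + 16|C₄|`, and for
`n ≥ 24` the orbifold lattice has `|V₁| = n + 8|C₄|`, strictly smaller. -/
theorem weight_one_operator_counts {n : ℕ} (C : Set (Fin n → ZMod 2))
    (hC : IsSinglyEvenSelfDual C) (hn : 8 ∣ n) :
    n + {l ∈ constructionA C | nsq l = 2}.ncard
      = 3 * n + 16 * {c ∈ C | wt c = 4}.ncard ∧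
    (24 ≤ n →
      n + {l ∈ orbPlus (constructionA C) (deltaAll n) | nsq l = 2}.ncard
          = n + 8 * {c ∈ C | wt c = 4}.ncard ∧
      n + 8 * {c ∈ C | wt c = 4}.ncard < 3 * n + 16 * {c ∈ C | wt c = 4}.ncard) := by
  classical
  have h0 : (0 : Fin n → ZMod 2) ∈ C := by
    rw [hC.1]
    intro c _hc
    simp [codeDot]
  have e1 : {l ∈ constructionA C | nsq l = 2}.ncard
      = 2 * n + 16 * {c ∈ C | wt c = 4}.ncard := by
    rw [constructionA_norm2, Set.ncard_image_of_injective _ phiA_injective, count_A C h0]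
  constructor
  · omega
  · intro h24
    have e2 : {l ∈ orbPlus (constructionA C) (deltaAll n) | nsq l = 2}.ncard
        = 8 * {c ∈ C | wt c = 4}.ncard := by
      rw [orb_norm2 C h24, deltaEven_norm2,
        Set.ncard_image_of_injective _ phiA_injective, count_A' C h0]
    exact ⟨by omega, by omega⟩

end PaperFormal
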